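/- For 0 < x < n, the ratio r_{n,k}(x) can be written as r_{n,k}(x) = ((n−x)/x) · [∑_i C(k,i) C(n−k−1, x−i−1) c^{−i}] / [∑_i C(k,i) C(n−k−1, x−i) c^{−i}], where c = (a/(1−a))·(b/(1−b)); in particular r_{n,k}(x) depends on (a,b) only through c, so r_{n,k}(x|a,b) = r_{n,k}(x|b,a). -/

import Mathlib

open Finset

/-- The Binomial(m, p) probability mass function. -/
noncomputable def binpmf (m : ℕ) (p : ℝ) (j : ℕ) : ℝ :=
  (m.choose j : ℝ) * p ^ j * (1 - p) ^ (m - j)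

/-- The pmf `g_{m,k}` of the sum of independent Bin(k, 1-a) and Bin(m-k, b)
random variables (discrete convolution). -/
noncomputable def gconv (m k : ℕ) (a b : ℝ) (x : ℕ) : ℝ :=
  ∑ j ∈ Finset.range (x + 1), binpmf k (1 - a) j * binpmf (m - k) b (x - j)

/-- The ratio r_{n,k}(x) = (b/(1-b))·((n-x)/x)·g_{n-1,k}(x-1)/g_{n-1,k}(x). -/
noncomputable def ratioA (n k : ℕ) (a b : ℝ) (x : ℕ) : ℝ :=
  (b / (1 - b)) * (((n : ℝ) - x) / x) *
    (gconv (n - 1) k a b (x - 1) / gconv (n - 1) k a b x)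

lemma S_pos (m k x : ℕ) (hk : k ≤ m) (hx : x ≤ m) (t : ℝ) (ht : 0 < t) :
    0 < ∑ j ∈ Finset.range (x + 1),
      (k.choose j : ℝ) * ((m - k).choose (x - j) : ℝ) * t ^ j := by
  apply Finset.sum_pos'
  · intro i _; positivity
  · refine ⟨min k x, mem_range.mpr (Nat.lt_succ_of_le (min_le_right _ _)), ?_⟩
    have h1 : 0 < (k.choose (min k x) : ℝ) := by
      exact_mod_cast Nat.choose_pos (min_le_left _ _)
    have h2 : x - min k x ≤ m - k := by
      rcases le_total k x with h | h
      · rw [min_eq_left h]; exact Nat.sub_le_sub_right hx k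
      · rw [min_eq_right h]; simp
    have h3 : 0 < (((m - k).choose (x - min k x)) : ℝ) := by
      exact_mod_cast Nat.choose_pos h2
    positivity

lemma gconv_eq (m k x : ℕ) (a b : ℝ) (ha0 : 0 < a) (ha1 : a < 1)
    (hb0 : 0 < b) (hb1 : b < 1) :
    gconv m k a b x = a ^ k * (1 - b) ^ (m - k) * (b / (1 - b)) ^ x *
      ∑ j ∈ Finset.range (x + 1),
        (k.choose j : ℝ) * ((m - k).choose (x - j) : ℝ)
          * ((1 - a) * (1 - b) / (a * b)) ^ j := by
  have ha' : (1 : ℝ) - a ≠ 0 := by linarith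
  have hb' : (1 : ℝ) - b ≠ 0 := by linarith
  have ha0' : a ≠ 0 := ne_of_gt ha0
  have hb0' : b ≠ 0 := ne_of_gt hb0
  rw [gconv, Finset.mul_sum]
  apply Finset.sum_congr rfl
  intro j hj
  simp only [binpmf]
  by_cases hjk : j ≤ k
  · by_cases hxj : x - j ≤ m - k
    · have hj' : j ≤ x := Nat.lt_succ_iff.mp (mem_range.mp hj)
      have e1 : a ^ k = a ^ j * a ^ (k - j) := by
        rw [← pow_add, Nat.add_sub_cancel' hjk]
      have e2 : ((1 : ℝ) - b) ^ (m - k)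
          = (1 - b) ^ (x - j) * (1 - b) ^ (m - k - (x - j)) := by
        rw [← pow_add, Nat.add_sub_cancel' hxj]
      have e3 : (b / (1 - b)) ^ x = (b / (1 - b)) ^ j * (b / (1 - b)) ^ (x - j) := by
        rw [← pow_add, Nat.add_sub_cancel' hj']
      have h1a : (1 : ℝ) - (1 - a) = a := by ring
      rw [h1a, e1, e2, e3,
        show ((1 - a) * (1 - b) / (a * b)) ^ j
            = (1 - a) ^ j * (1 - b) ^ j / (a ^ j * b ^ j) by
          rw [div_pow, mul_pow, mul_pow]]
      field_simp
      have h1 : ((1:ℝ) - b)⁻¹ ^ (x - j) * (1 - b) ^ (x - j) = 1 := by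
        rw [← mul_pow, inv_mul_cancel₀ hb', one_pow]
      have h2 : ((1:ℝ) - b)⁻¹ ^ j * (1 - b) ^ j = 1 := by
        rw [← mul_pow, inv_mul_cancel₀ hb', one_pow]
      linear_combination (-((k.choose j : ℝ) * ((m - k).choose (x - j) : ℝ) * b ^ (x - j) * b ^ j)
          * (((1:ℝ) - b)⁻¹ ^ j * (1 - b) ^ j)) * h1
        + (-((k.choose j : ℝ) * ((m - k).choose (x - j) : ℝ) * b ^ (x - j) * b ^ j)) * h2
    · have : (m - k).choose (x - j) = 0 := Nat.choose_eq_zero_of_lt (lt_of_not_ge hxj)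
      simp [this]
  · have : k.choose j = 0 := Nat.choose_eq_zero_of_lt (lt_of_not_ge hjk)
    simp [this]

lemma ratioA_formula (n k x : ℕ) (hk1 : 1 ≤ k) (hkn : k < n) (hx0 : 0 < x) (hxn : x < n)
    (a b : ℝ) (ha0 : 0 < a) (ha1 : a < 1) (hb0 : 0 < b) (hb1 : b < 1)
    (c : ℝ) (hc : c = (a / (1 - a)) * (b / (1 - b))) :
    ratioA n k a b x =
      (((n : ℝ) - x) / x) *
        ((∑ i ∈ Finset.range x,
            (k.choose i : ℝ) * ((n - k - 1).choose (x - i - 1) : ℝ) * (1 / c) ^ i) /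
          (∑ i ∈ Finset.range (x + 1),
            (k.choose i : ℝ) * ((n - k - 1).choose (x - i) : ℝ) * (1 / c) ^ i)) := by
  have ha' : (1 : ℝ) - a ≠ 0 := by linarith
  have hb' : (1 : ℝ) - b ≠ 0 := by linarith
  have ha0' : a ≠ 0 := ne_of_gt ha0
  have hb0' : b ≠ 0 := ne_of_gt hb0
  have hx' : x - 1 + 1 = x := Nat.succ_pred_eq_of_pos hx0
  have hnk : n - k - 1 = n - 1 - k := Nat.sub_right_comm n k 1
  have htc : 1 / c = (1 - a) * (1 - b) / (a * b) := by
    rw [hc]; field_simp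
  have ht : (0 : ℝ) < (1 - a) * (1 - b) / (a * b) := by
    apply div_pos (mul_pos (by linarith) (by linarith)) (mul_pos ha0 hb0)
  have hkm : k ≤ n - 1 := Nat.le_sub_one_of_lt hkn
  have hxm : x ≤ n - 1 := Nat.le_sub_one_of_lt hxn
  have hxm' : x - 1 ≤ n - 1 := le_trans (Nat.sub_le x 1) hxm
  -- rewrite the RHS sums
  rw [htc, hnk]
  have hsub : ∀ i : ℕ, x - i - 1 = x - 1 - i := fun i => Nat.sub_right_comm x i 1
  simp only [hsub]
  rw [show Finset.range x = Finset.range (x - 1 + 1) by rw [hx']]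
  rw [ratioA, gconv_eq _ _ _ _ _ ha0 ha1 hb0 hb1, gconv_eq _ _ _ _ _ ha0 ha1 hb0 hb1]
  have hS2 := S_pos (n - 1) k x hkm hxm _ ht
  have hS2' : (∑ j ∈ Finset.range (x + 1),
      (k.choose j : ℝ) * ((n - 1 - k).choose (x - j) : ℝ)
        * ((1 - a) * (1 - b) / (a * b)) ^ j) ≠ 0 := ne_of_gt hS2
  have hu : b / (1 - b) ≠ 0 := div_ne_zero hb0' hb'
  have hpow : (b / (1 - b)) ^ x = (b / (1 - b)) ^ (x - 1) * (b / (1 - b)) := by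
    conv_lhs => rw [← hx']
    rw [pow_succ]
  rw [hpow]
  have hxR : (x : ℝ) ≠ 0 := Nat.cast_ne_zero.mpr hx0.ne'
  set S1 := ∑ j ∈ Finset.range (x - 1 + 1),
      (k.choose j : ℝ) * ((n - 1 - k).choose (x - 1 - j) : ℝ)
        * ((1 - a) * (1 - b) / (a * b)) ^ j with hS1def
  set S2 := ∑ j ∈ Finset.range (x + 1),
      (k.choose j : ℝ) * ((n - 1 - k).choose (x - j) : ℝ)
        * ((1 - a) * (1 - b) / (a * b)) ^ j with hS2def
  field_simp

theorem stmt11 (n k x : ℕ) (hk1 : 1 ≤ k) (hkn : k < n) (hx0 : 0 < x) (hxn : x < n)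
    (a b : ℝ) (ha0 : 0 < a) (ha1 : a < 1) (hb0 : 0 < b) (hb1 : b < 1)
    (c : ℝ) (hc : c = (a / (1 - a)) * (b / (1 - b))) :
    (ratioA n k a b x =
      (((n : ℝ) - x) / x) *
        ((∑ i ∈ Finset.range x,
            (k.choose i : ℝ) * ((n - k - 1).choose (x - i - 1) : ℝ) * (1 / c) ^ i) /
          (∑ i ∈ Finset.range (x + 1),
            (k.choose i : ℝ) * ((n - k - 1).choose (x - i) : ℝ) * (1 / c) ^ i))) ∧
    ratioA n k a b x = ratioA n k b a x := by
  have h1 := ratioA_formula n k x hk1 hkn hx0 hxn a b ha0 ha1 hb0 hb1 c hc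
  have h2 := ratioA_formula n k x hk1 hkn hx0 hxn b a hb0 hb1 ha0 ha1 c
    (by rw [hc]; ring)
  exact ⟨h1, by rw [h1, h2]⟩
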